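/- The octonion loop O_L satisfies the Moufang identity (x·y)·(z·x) = (x·(y·z))·x for all x, y, z ∈ O_L, whereas the quasi-octonion loop Õ_L does not: there exist x, y, z ∈ Õ_L with (x·y)·(z·x) ≠ (x·(y·z))·x. In particular O_L and Õ_L are not isomorphic. -/

import Mathlib

/-- Iterated Cayley–Dickson doubling starting from `ℝ`. -/
def CD : ℕ → Type
  | 0 => ℝ
  | n + 1 => CD n × CD n

instance cdAddCommGroup : ∀ n, AddCommGroup (CD n)
  | 0 => inferInstanceAs (AddCommGroup ℝ)
  | n + 1 => letI := cdAddCommGroup n; inferInstanceAs (AddCommGroup (CD n × CD n))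

noncomputable instance cdModule : ∀ n, Module ℝ (CD n)
  | 0 => inferInstanceAs (Module ℝ ℝ)
  | n + 1 => letI := cdModule n; inferInstanceAs (Module ℝ (CD n × CD n))

/-- Cayley–Dickson conjugation, starting from the identity on `ℝ`. -/
def cdConj : ∀ n, CD n → CD n
  | 0, x => x
  | n + 1, x => (cdConj n x.1, -x.2)

/-- Cayley–Dickson multiplication: `(a,b)(c,d) = (ac − d b̄, ā d + c b)`. -/
def cdMul : ∀ n, CD n → CD n → CD n
  | 0, x, y => @Mul.mul ℝ _ x y
  | n + 1, x, y =>
      (cdMul n x.1 y.1 - cdMul n y.2 (cdConj n x.2),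
       cdMul n (cdConj n x.1) y.2 + cdMul n y.1 x.2)

instance cdMulInst (n : ℕ) : Mul (CD n) := ⟨cdMul n⟩

instance cdOne : ∀ n, One (CD n)
  | 0 => ⟨(1 : ℝ)⟩
  | n + 1 => letI := cdOne n; ⟨((1 : CD n), 0)⟩

/-- The standard basis elements: under a doubling step `A → A × A`, a basis element
`e k` of `A` gives `e k = (e k, 0)` and `e (k + dim A) = (0, e k)`. -/
def cdE : ∀ n, ℕ → CD n
  | 0, _ => (1 : ℝ)
  | n + 1, k => if k < 2 ^ n then (cdE n k, 0) else (0, cdE n (k - 2 ^ n))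

/-- The trigintaduonions: the 32-dimensional real Cayley–Dickson algebra. -/
abbrev TT := CD 5

/-- The 32 standard basis elements `e 0 = 1, e 1, …, e 31` of `𝕋`. -/
def e (i : ℕ) : TT := cdE 5 i

/-- The trigintaduonion loop `T_L = {±e 0, ±e 1, …, ±e 31}`. -/
def TL : Set TT := {x | ∃ i < 32, x = e i ∨ x = -e i}

/-- A subloop of `T_L`: a nonempty subset of `T_L` closed under multiplication. -/
def IsSubloop (N : Set TT) : Prop :=
  N ⊆ TL ∧ N.Nonempty ∧ ∀ x ∈ N, ∀ y ∈ N, x * y ∈ N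

/-- Two subsets of `T_L` are isomorphic (as loops) if some bijection between them
preserves multiplication. -/
def LoopIso (A B : Set TT) : Prop :=
  ∃ f : TT → TT, Set.BijOn f A B ∧ ∀ x ∈ A, ∀ y ∈ A, f (x * y) = f x * f y

/-- The standard sedenion loop `S_L = {±e i : 0 ≤ i ≤ 15}`. -/
def SL : Set TT := {x | ∃ i < 16, x = e i ∨ x = -e i}

/-- Index set of the α-sedenion loop. -/
def idxα : Set ℕ := {0, 1, 2, 3, 8, 9, 10, 11, 20, 21, 22, 23, 28, 29, 30, 31}

/-- Index set of the β-sedenion loop. -/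
def idxβ : Set ℕ := {0, 1, 2, 3, 12, 13, 14, 15, 20, 21, 22, 23, 24, 25, 26, 27}

/-- Index set of the γ-sedenion loop. -/
def idxγ : Set ℕ := {0, 1, 2, 3, 4, 5, 6, 7, 24, 25, 26, 27, 28, 29, 30, 31}

/-- The α-sedenion loop `S_L^α`. -/
def SLα : Set TT := {x | ∃ i ∈ idxα, x = e i ∨ x = -e i}

/-- The β-sedenion loop `S_L^β`. -/
def SLβ : Set TT := {x | ∃ i ∈ idxβ, x = e i ∨ x = -e i}

/-- The γ-sedenion loop `S_L^γ`. -/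
def SLγ : Set TT := {x | ∃ i ∈ idxγ, x = e i ∨ x = -e i}

/-- The octonion loop `O_L = {±e i : 0 ≤ i ≤ 7}`. -/
def OL : Set TT := {x | ∃ i < 8, x = e i ∨ x = -e i}

/-- The quasi-octonion loop `Õ_L = {±e i : i ∈ {0,1,2,3,12,13,14,15}}`. -/
def QOL : Set TT :=
  {x | ∃ i ∈ ({0, 1, 2, 3, 12, 13, 14, 15} : Set ℕ), x = e i ∨ x = -e i}

/- ===== auxiliary: integer model of the Cayley–Dickson construction ===== -/

def CDZ : ℕ → Type
  | 0 => ℤ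
  | n + 1 => CDZ n × CDZ n

def cdzDecEq : ∀ n, DecidableEq (CDZ n)
  | 0 => inferInstanceAs (DecidableEq ℤ)
  | n + 1 => letI := cdzDecEq n; inferInstanceAs (DecidableEq (CDZ n × CDZ n))

attribute [instance] cdzDecEq

def zNeg : ∀ n, CDZ n → CDZ n
  | 0, x => show CDZ 0 from -(show ℤ from x)
  | n + 1, x => (zNeg n x.1, zNeg n x.2)

def zAdd : ∀ n, CDZ n → CDZ n → CDZ n
  | 0, x, y => show CDZ 0 from (show ℤ from x) + (show ℤ from y)
  | n + 1, x, y => (zAdd n x.1 y.1, zAdd n x.2 y.2)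

def zSub (n : ℕ) (x y : CDZ n) : CDZ n := zAdd n x (zNeg n y)

def zConj : ∀ n, CDZ n → CDZ n
  | 0, x => x
  | n + 1, x => (zConj n x.1, zNeg n x.2)

def zMul : ∀ n, CDZ n → CDZ n → CDZ n
  | 0, x, y => show CDZ 0 from (show ℤ from x) * (show ℤ from y)
  | n + 1, x, y =>
      (zSub n (zMul n x.1 y.1) (zMul n y.2 (zConj n x.2)),
       zAdd n (zMul n (zConj n x.1) y.2) (zMul n y.1 x.2))

def zZero : ∀ n, CDZ n
  | 0 => (0 : ℤ)
  | n + 1 => (zZero n, zZero n)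

def zE : ∀ n, ℕ → CDZ n
  | 0, _ => (1 : ℤ)
  | n + 1, k => if k < 2 ^ n then (zE n k, zZero n) else (zZero n, zE n (k - 2 ^ n))

def φ : ∀ n, CDZ n → CD n
  | 0, x => show CD 0 from ((show ℤ from x : ℤ) : ℝ)
  | n + 1, x => (φ n x.1, φ n x.2)

theorem φ_inj : ∀ n, Function.Injective (φ n)
  | 0 => fun a b h => by
      have : ((show ℤ from a : ℤ) : ℝ) = ((show ℤ from b : ℤ) : ℝ) := h
      exact_mod_cast this
  | n + 1 => fun a b h => by
      have h1 := congrArg Prod.fst h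
      have h2 := congrArg Prod.snd h
      exact Prod.ext (φ_inj n h1) (φ_inj n h2)

theorem φ_neg : ∀ n (x : CDZ n), φ n (zNeg n x) = -(φ n x)
  | 0, x => by show ((-(show ℤ from x) : ℤ) : ℝ) = -(((show ℤ from x) : ℤ) : ℝ); exact Int.cast_neg _
  | n + 1, x => by
      show (φ n (zNeg n x.1), φ n (zNeg n x.2)) = -(φ n x.1, φ n x.2)
      rw [φ_neg n, φ_neg n]; rfl

theorem φ_add : ∀ n (x y : CDZ n), φ n (zAdd n x y) = φ n x + φ n y
  | 0, x, y => by
      show (((show ℤ from x) + (show ℤ from y) : ℤ) : ℝ)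
        = ((show ℤ from x : ℤ):ℝ) + ((show ℤ from y : ℤ):ℝ)
      exact Int.cast_add _ _
  | n + 1, x, y => by
      show (φ n (zAdd n x.1 y.1), φ n (zAdd n x.2 y.2)) = (φ n x.1, φ n x.2) + (φ n y.1, φ n y.2)
      rw [φ_add n, φ_add n]; rfl

theorem φ_sub (n : ℕ) (x y : CDZ n) : φ n (zSub n x y) = φ n x - φ n y := by
  rw [zSub, φ_add, φ_neg, sub_eq_add_neg]

theorem φ_conj : ∀ n (x : CDZ n), φ n (zConj n x) = cdConj n (φ n x)
  | 0, x => rfl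
  | n + 1, x => by
      show (φ n (zConj n x.1), φ n (zNeg n x.2)) = (cdConj n (φ n x.1), -(φ n x.2))
      rw [φ_conj n, φ_neg n]

theorem φ_mul : ∀ n (x y : CDZ n), φ n (zMul n x y) = cdMul n (φ n x) (φ n y)
  | 0, x, y => by
      show (((show ℤ from x) * (show ℤ from y) : ℤ) : ℝ)
        = ((show ℤ from x : ℤ):ℝ) * ((show ℤ from y : ℤ):ℝ)
      exact Int.cast_mul _ _
  | n + 1, x, y => by
      show (φ n (zSub n (zMul n x.1 y.1) (zMul n y.2 (zConj n x.2))),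
            φ n (zAdd n (zMul n (zConj n x.1) y.2) (zMul n y.1 x.2))) = _
      rw [φ_sub, φ_add, φ_mul n, φ_mul n, φ_mul n, φ_mul n, φ_conj, φ_conj]
      rfl

theorem φ_zero : ∀ n, φ n (zZero n) = 0
  | 0 => by show ((0:ℤ):ℝ) = (0:ℝ); norm_num
  | n + 1 => by
      show (φ n (zZero n), φ n (zZero n)) = (0 : CD n × CD n)
      rw [φ_zero n]; rfl

theorem φ_e : ∀ n (k : ℕ), φ n (zE n k) = cdE n k
  | 0, k => by show ((1:ℤ):ℝ) = (1:ℝ); norm_num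
  | n + 1, k => by
      by_cases h : k < 2 ^ n
      · show φ (n+1) (if k < 2 ^ n then (zE n k, zZero n) else _) = _
        rw [show (if k < 2 ^ n then (zE n k, zZero n) else (zZero n, zE n (k - 2^n)) : CDZ (n+1)) = (zE n k, zZero n) from if_pos h,
          show cdE (n+1) k = ((cdE n k, 0) : CD (n+1)) from if_pos h]
        show (φ n (zE n k), φ n (zZero n)) = _
        rw [φ_e n, φ_zero]
      · show φ (n+1) (if k < 2 ^ n then _ else (zZero n, zE n (k - 2^n))) = _
        rw [show (if k < 2 ^ n then (zE n k, zZero n) else (zZero n, zE n (k - 2^n)) : CDZ (n+1)) = (zZero n, zE n (k - 2^n)) from if_neg h,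
          show cdE (n+1) k = ((0, cdE n (k - 2^n)) : CD (n+1)) from if_neg h]
        show (φ n (zZero n), φ n (zE n (k - 2^n))) = _
        rw [φ_e n, φ_zero]

/- ===== zero lemmas in the integer model ===== -/

theorem zNeg_zero : ∀ n, zNeg n (zZero n) = zZero n
  | 0 => by show ((-(0:ℤ) : ℤ)) = _; norm_num; rfl
  | n + 1 => by show (zNeg n (zZero n), zNeg n (zZero n)) = _; rw [zNeg_zero n]; rfl

theorem zAdd_zero : ∀ n (x : CDZ n), zAdd n x (zZero n) = x
  | 0, x => by show ((show ℤ from x) + (0:ℤ)) = x; exact add_zero _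
  | n + 1, x => by
      show (zAdd n x.1 (zZero n), zAdd n x.2 (zZero n)) = x
      rw [zAdd_zero n, zAdd_zero n]
      rfl

theorem zConj_zero : ∀ n, zConj n (zZero n) = zZero n
  | 0 => rfl
  | n + 1 => by
      show (zConj n (zZero n), zNeg n (zZero n)) = _
      rw [zConj_zero n, zNeg_zero n]; rfl

theorem zMulZero : ∀ n, (∀ x, zMul n x (zZero n) = zZero n) ∧ (∀ y, zMul n (zZero n) y = zZero n)
  | 0 => ⟨fun x => by show ((show ℤ from x) * (0:ℤ)) = _; rw [mul_zero]; rfl,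
          fun y => by show ((0:ℤ) * (show ℤ from y)) = _; rw [zero_mul]; rfl⟩
  | n + 1 => by
      constructor
      · intro x
        show (zSub n (zMul n x.1 (zZero n)) (zMul n (zZero n) (zConj n x.2)),
              zAdd n (zMul n (zConj n x.1) (zZero n)) (zMul n (zZero n) x.2)) = _
        simp only [(zMulZero n).1, (zMulZero n).2, zSub, zNeg_zero, zAdd_zero]
        rfl
      · intro y
        show (zSub n (zMul n (zZero n) y.1) (zMul n y.2 (zConj n (zZero n))),
              zAdd n (zMul n (zConj n (zZero n)) y.2) (zMul n y.1 (zZero n))) = _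
        simp only [zConj_zero, (zMulZero n).1, (zMulZero n).2, zSub, zNeg_zero, zAdd_zero]
        rfl

theorem zMulLift (n : ℕ) (a b : CDZ n) :
    zMul (n+1) (a, zZero n) (b, zZero n) = (zMul n a b, zZero n) := by
  show (zSub n (zMul n a b) (zMul n (zZero n) (zConj n (zZero n))),
        zAdd n (zMul n (zConj n a) (zZero n)) (zMul n b (zZero n))) = _
  rw [(zMulZero n).2, (zMulZero n).1, (zMulZero n).1, zSub, zNeg_zero, zAdd_zero, zAdd_zero]

theorem zNegLift (n : ℕ) (a : CDZ n) :
    zNeg (n+1) (a, zZero n) = (zNeg n a, zZero n) := by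
  show (zNeg n a, zNeg n (zZero n)) = _
  rw [zNeg_zero]

theorem zELift (n : ℕ) (i : ℕ) (h : i < 2 ^ n) : zE (n+1) i = (zE n i, zZero n) := by
  show (if i < 2 ^ n then (zE n i, zZero n) else _) = _
  rw [if_pos h]

/- ===== computations, done at the octonion level ===== -/

set_option maxHeartbeats 1200000 in
theorem moufangZ3 : ∀ i ∈ Finset.range 8, ∀ j ∈ Finset.range 8, ∀ k ∈ Finset.range 8,
    zMul 3 (zMul 3 (zE 3 i) (zE 3 j)) (zMul 3 (zE 3 k) (zE 3 i)) =
    zMul 3 (zMul 3 (zE 3 i) (zMul 3 (zE 3 j) (zE 3 k))) (zE 3 i) := by decide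

set_option maxHeartbeats 1000000 in
theorem closureZ3 : ∀ i ∈ Finset.range 8, ∀ j ∈ Finset.range 8, ∃ m ∈ Finset.range 8,
    zMul 3 (zE 3 i) (zE 3 j) = zE 3 m ∨ zMul 3 (zE 3 i) (zE 3 j) = zNeg 3 (zE 3 m) := by decide

set_option maxHeartbeats 1000000 in
theorem cexZ : zMul 5 (zMul 5 (zE 5 1) (zE 5 2)) (zMul 5 (zE 5 12) (zE 5 1)) ≠
    zMul 5 (zMul 5 (zE 5 1) (zMul 5 (zE 5 2) (zE 5 12))) (zE 5 1) := by decide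

theorem hE5 : ∀ m, m < 8 → zE 5 m = ((zE 3 m, zZero 3), zZero 4) := by
  intro m hm
  rw [zELift 4 m (by norm_num; omega), zELift 3 m (by norm_num; omega)]
  rfl

theorem keyLift : ∀ u v : CDZ 3,
    zMul 5 (((u, zZero 3), zZero 4) : (CDZ 3 × CDZ 3) × CDZ 4)
      (((v, zZero 3), zZero 4) : (CDZ 3 × CDZ 3) × CDZ 4) = ((zMul 3 u v, zZero 3), zZero 4) := by
  intro u v
  erw [zMulLift 4, zMulLift 3]
  rfl

theorem moufangZ5 : ∀ i < 8, ∀ j < 8, ∀ k < 8,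
    zMul 5 (zMul 5 (zE 5 i) (zE 5 j)) (zMul 5 (zE 5 k) (zE 5 i)) =
    zMul 5 (zMul 5 (zE 5 i) (zMul 5 (zE 5 j) (zE 5 k))) (zE 5 i) := by
  intro i hi j hj k hk
  rw [hE5 i hi, hE5 j hj, hE5 k hk]
  simp only [keyLift]
  exact congrArg (fun t => ((t, zZero 3), zZero 4))
    (moufangZ3 i (Finset.mem_range.2 hi) j (Finset.mem_range.2 hj) k (Finset.mem_range.2 hk))

theorem closureZ5 : ∀ i < 8, ∀ j < 8, ∃ m < 8,
    zMul 5 (zE 5 i) (zE 5 j) = zE 5 m ∨ zMul 5 (zE 5 i) (zE 5 j) = zNeg 5 (zE 5 m) := by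
  intro i hi j hj
  obtain ⟨m, hm, hc⟩ := closureZ3 i (Finset.mem_range.2 hi) j (Finset.mem_range.2 hj)
  have hm8 := Finset.mem_range.1 hm
  refine ⟨m, hm8, ?_⟩
  rw [hE5 i hi, hE5 j hj]
  simp only [keyLift]
  rw [hE5 m hm8]
  rcases hc with h | h
  · exact Or.inl (congrArg (fun t => ((t, zZero 3), zZero 4)) h)
  · refine Or.inr ?_
    rw [h]
    exact (congrArg₂ Prod.mk (zNegLift 3 (zE 3 m)) (zNeg_zero 4)).symm

/- ===== sign lemmas in CD ===== -/

theorem cdConj_neg : ∀ n (x : CD n), cdConj n (-x) = -cdConj n x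
  | 0, x => rfl
  | n + 1, x => Prod.ext (cdConj_neg n x.1) rfl

theorem cdMul_neg : ∀ n (x y : CD n),
    cdMul n (-x) y = -cdMul n x y ∧ cdMul n x (-y) = -cdMul n x y
  | 0, x, y => ⟨neg_mul (show ℝ from x) (show ℝ from y),
                mul_neg (show ℝ from x) (show ℝ from y)⟩
  | n + 1, x, y => by
      refine ⟨Prod.ext ?_ ?_, Prod.ext ?_ ?_⟩
      · show cdMul n (-x.1) y.1 - cdMul n y.2 (cdConj n (-x.2))
          = -(cdMul n x.1 y.1 - cdMul n y.2 (cdConj n x.2))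
        rw [cdConj_neg, (cdMul_neg n x.1 y.1).1, (cdMul_neg n y.2 (cdConj n x.2)).2]; abel
      · show cdMul n (cdConj n (-x.1)) y.2 + cdMul n y.1 (-x.2)
          = -(cdMul n (cdConj n x.1) y.2 + cdMul n y.1 x.2)
        rw [cdConj_neg, (cdMul_neg n (cdConj n x.1) y.2).1, (cdMul_neg n y.1 x.2).2]; abel
      · show cdMul n x.1 (-y.1) - cdMul n (-y.2) (cdConj n x.2)
          = -(cdMul n x.1 y.1 - cdMul n y.2 (cdConj n x.2))
        rw [(cdMul_neg n x.1 y.1).2, (cdMul_neg n y.2 (cdConj n x.2)).1]; abel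
      · show cdMul n (cdConj n x.1) (-y.2) + cdMul n (-y.1) x.2
          = -(cdMul n (cdConj n x.1) y.2 + cdMul n y.1 x.2)
        rw [(cdMul_neg n (cdConj n x.1) y.2).2, (cdMul_neg n y.1 x.2).1]; abel

theorem neg_mul₅ (x y : TT) : (-x) * y = -(x * y) := (cdMul_neg 5 x y).1

theorem mul_neg₅ (x y : TT) : x * (-y) = -(x * y) := (cdMul_neg 5 x y).2

/- ===== transfer to the basis elements of 𝕋 ===== -/

theorem moufangE : ∀ i < 8, ∀ j < 8, ∀ k < 8,
    (e i * e j) * (e k * e i) = (e i * (e j * e k)) * e i := by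
  intro i hi j hj k hk
  have h := congrArg (φ 5) (moufangZ5 i hi j hj k hk)
  simp only [φ_mul, φ_e] at h
  exact h

theorem closureE : ∀ i < 8, ∀ j < 8, ∃ m < 8, e i * e j = e m ∨ e i * e j = -(e m) := by
  intro i hi j hj
  obtain ⟨m, hm, hc⟩ := closureZ5 i hi j hj
  refine ⟨m, hm, ?_⟩
  rcases hc with h | h
  · have := congrArg (φ 5) h
    simp only [φ_mul, φ_e] at this
    exact Or.inl this
  · have := congrArg (φ 5) h
    simp only [φ_mul, φ_neg, φ_e] at this
    exact Or.inr this

theorem OL_mul_mem : ∀ x ∈ OL, ∀ y ∈ OL, x * y ∈ OL := by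
  have base : ∀ i < 8, ∀ j < 8, e i * e j ∈ OL := by
    intro i hi j hj
    obtain ⟨m, hm, h | h⟩ := closureE i hi j hj
    · exact ⟨m, hm, Or.inl h⟩
    · exact ⟨m, hm, Or.inr h⟩
  have negmem : ∀ t : TT, t ∈ OL → -t ∈ OL := by
    rintro t ⟨i, hi, rfl | rfl⟩
    · exact ⟨i, hi, Or.inr rfl⟩
    · exact ⟨i, hi, Or.inl (neg_neg _)⟩
  rintro x ⟨i, hi, rfl | rfl⟩ y ⟨j, hj, rfl | rfl⟩
  · exact base i hi j hj
  · rw [mul_neg₅]; exact negmem _ (base i hi j hj)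
  · rw [neg_mul₅]; exact negmem _ (base i hi j hj)
  · rw [neg_mul₅, mul_neg₅, neg_neg]; exact base i hi j hj

theorem OL_moufang : ∀ x ∈ OL, ∀ y ∈ OL, ∀ z ∈ OL,
    (x * y) * (z * x) = (x * (y * z)) * x := by
  rintro x ⟨i, hi, rfl | rfl⟩ y ⟨j, hj, rfl | rfl⟩ z ⟨k, hk, rfl | rfl⟩ <;>
    first
      | with_reducible exact moufangE i hi j hj k hk
      | (simp only [neg_mul₅, mul_neg₅, neg_neg]
         first
           | with_reducible exact moufangE i hi j hj k hk
           | with_reducible exact congrArg Neg.neg (moufangE i hi j hj k hk))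

theorem QOL_cex : (e 1 * e 2) * (e 12 * e 1) ≠ (e 1 * (e 2 * e 12)) * e 1 := by
  intro h
  apply cexZ
  apply φ_inj 5
  simp only [φ_mul, φ_e]
  exact h

/-- `O_L` satisfies the Moufang identity `(x·y)·(z·x) = (x·(y·z))·x` while `Õ_L` does
not; in particular `O_L` and `Õ_L` are not isomorphic. -/
theorem stmt12 :
    (∀ x ∈ OL, ∀ y ∈ OL, ∀ z ∈ OL, (x * y) * (z * x) = (x * (y * z)) * x) ∧
    (∃ x ∈ QOL, ∃ y ∈ QOL, ∃ z ∈ QOL, (x * y) * (z * x) ≠ (x * (y * z)) * x) ∧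
    ¬ LoopIso OL QOL := by
  have hq1 : e 1 ∈ QOL := ⟨1, by norm_num, Or.inl rfl⟩
  have hq2 : e 2 ∈ QOL := ⟨2, by norm_num, Or.inl rfl⟩
  have hq12 : e 12 ∈ QOL := ⟨12, by norm_num, Or.inl rfl⟩
  refine ⟨OL_moufang, ⟨e 1, hq1, e 2, hq2, e 12, hq12, QOL_cex⟩, ?_⟩
  rintro ⟨f, hbij, hf⟩
  obtain ⟨x, hx, hfx⟩ := hbij.surjOn hq1
  obtain ⟨y, hy, hfy⟩ := hbij.surjOn hq2
  obtain ⟨z, hz, hfz⟩ := hbij.surjOn hq12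
  have h1 : f ((x * y) * (z * x)) = (e 1 * e 2) * (e 12 * e 1) := by
    rw [hf _ (OL_mul_mem x hx y hy) _ (OL_mul_mem z hz x hx),
        hf x hx y hy, hf z hz x hx, hfx, hfy, hfz]
  have h2 : f ((x * (y * z)) * x) = (e 1 * (e 2 * e 12)) * e 1 := by
    rw [hf _ (OL_mul_mem x hx _ (OL_mul_mem y hy z hz)) x hx,
        hf x hx _ (OL_mul_mem y hy z hz), hf y hy z hz, hfx, hfy, hfz]
  exact QOL_cex (by rw [← h1, ← h2, OL_moufang x hx y hy z hz])
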